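/- arXiv:2309.10502 — 2 statements merged into one kernel-verified Lean document; each statement's English description precedes it below -/
import Mathlib

section
/- For any real parameters α and τ, the function f(z) = (1/Φ(τ)) · φ(z) · Φ(τ·√(1+α²) + α·z) integrates to 1 over the real line, where φ and Φ denote the standard normal density and distribution function respectively. -/
open MeasureTheory Real

noncomputable def phi (x : ℝ) : ℝ := (Real.sqrt (2 * Real.pi))⁻¹ * Real.exp (-x ^ 2 / 2)

noncomputable def Phi (x : ℝ) : ℝ := ∫ t in Set.Iic x, phi t

lemma phi_pos (x : ℝ) : 0 < phi x := by
  unfold phi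
  positivity

lemma continuous_phi : Continuous phi := by
  unfold phi
  fun_prop

lemma integrable_phi : Integrable phi := by
  have h : Integrable (fun x : ℝ => Real.exp (-(2⁻¹ : ℝ) * x ^ 2)) :=
    integrable_exp_neg_mul_sq (by norm_num)
  have heq : phi = fun x => (Real.sqrt (2 * Real.pi))⁻¹ * Real.exp (-(2⁻¹ : ℝ) * x ^ 2) := by
    funext x; unfold phi; ring_nf
  rw [heq]
  exact h.const_mul _

lemma integral_phi : ∫ x : ℝ, phi x = 1 := by
  unfold phi
  rw [MeasureTheory.integral_const_mul]
  have h : (fun x : ℝ => Real.exp (-x ^ 2 / 2)) = fun x => Real.exp (-(2⁻¹ : ℝ) * x ^ 2) := by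
    funext x; ring_nf
  rw [h, integral_gaussian]
  rw [show (π / 2⁻¹ : ℝ) = 2 * π by ring]
  rw [inv_mul_cancel₀]
  positivity

lemma integrable_phi_affine (b d : ℝ) (hb : b ≠ 0) :
    Integrable (fun x : ℝ => phi (b * x + d)) := by
  have h1 : Integrable (fun x : ℝ => phi (x + d)) := integrable_phi.comp_add_right d
  exact h1.comp_mul_left' hb

lemma integral_phi_affine (b d : ℝ) (hb : 0 < b) :
    ∫ x : ℝ, phi (b * x + d) = b⁻¹ := by
  have h := MeasureTheory.Measure.integral_comp_mul_left (fun t : ℝ => phi (t + d)) b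
  simp only [smul_eq_mul] at h
  calc ∫ x : ℝ, phi (b * x + d) = |b⁻¹| * ∫ t : ℝ, phi (t + d) := h
    _ = b⁻¹ * 1 := by
        rw [integral_add_right_eq_self phi d, integral_phi, abs_of_pos (by positivity)]
    _ = b⁻¹ := by ring

lemma Phi_pos (x : ℝ) : 0 < Phi x := by
  unfold Phi
  rw [setIntegral_pos_iff_support_of_nonneg_ae]
  · have hsupp : Function.support phi = Set.univ := by
      ext y; simp [Function.mem_support, (phi_pos y).ne']
    rw [hsupp, Set.univ_inter]
    simp [Real.volume_Iic]
  · exact Filter.Eventually.of_forall fun y => (phi_pos y).le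
  · exact integrable_phi.integrableOn

lemma Phi_comp (c d τ : ℝ) (hc : 0 < c) :
    Phi (c * τ + d) = ∫ w in Set.Iic τ, c * phi (c * w + d) := by
  unfold Phi
  have himg : (fun w : ℝ => c * w + d) '' Set.Iic τ = Set.Iic (c * τ + d) := by
    ext x
    simp only [Set.mem_image, Set.mem_Iic]
    constructor
    · rintro ⟨w, hw, rfl⟩
      have := mul_le_mul_of_nonneg_left hw hc.le
      linarith
    · intro hx
      exact ⟨(x - d) / c, by rw [div_le_iff₀ hc]; nlinarith, by field_simp; ring⟩
  rw [← himg, integral_image_eq_integral_abs_deriv_smul (f' := fun _ => c) measurableSet_Iic]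
  · simp [abs_of_pos hc, smul_eq_mul]
  · intro x _
    simpa using ((hasDerivWithinAt_id x (Set.Iic τ)).const_mul c).add_const d
  · intro x _ y _ h
    dsimp only at h
    exact mul_left_cancel₀ hc.ne' (by linarith)

theorem esn_density_integrates_to_one (α τ : ℝ) :
    ∫ z : ℝ, (Phi τ)⁻¹ * phi z * Phi (τ * Real.sqrt (1 + α ^ 2) + α * z) = 1 := by
  set c : ℝ := Real.sqrt (1 + α ^ 2) with hcdef
  have hc : 0 < c := Real.sqrt_pos.mpr (by positivity)
  have hc2 : c ^ 2 = 1 + α ^ 2 := Real.sq_sqrt (by positivity)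
  -- key algebraic identity
  have hprod : ∀ u v : ℝ, phi u * (c * phi v)
      = (Real.sqrt (2 * Real.pi))⁻¹ * (Real.sqrt (2 * Real.pi))⁻¹ * c
        * Real.exp (-u ^ 2 / 2 + -v ^ 2 / 2) := by
    intro u v; unfold phi; rw [Real.exp_add]; ring
  have hkey : ∀ z w : ℝ, phi z * (c * phi (c * w + α * z))
      = phi w * (c * phi (c * z + α * w)) := by
    intro z w
    rw [hprod, hprod]
    congr 1
    congr 1
    linear_combination ((z ^ 2 - w ^ 2) / 2) * hc2
  -- the double-integral function
  set F : ℝ × ℝ → ℝ := fun p => phi p.1 * (c * phi (c * p.2 + α * p.1)) with hF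
  have hFcont : Continuous F := by
    apply Continuous.mul (continuous_phi.comp continuous_fst)
    exact Continuous.mul continuous_const
      (continuous_phi.comp (by fun_prop))
  have hFint : Integrable F (volume.prod (volume.restrict (Set.Iic τ))) := by
    rw [MeasureTheory.integrable_prod_iff hFcont.aestronglyMeasurable]
    constructor
    · refine Filter.Eventually.of_forall fun z => ?_
      exact (((integrable_phi_affine c (α * z) hc.ne').const_mul c).const_mul
        (phi z)).restrict
    · have hnorm : (fun z => ∫ w in Set.Iic τ, ‖F (z, w)‖) =
          fun z => ∫ w in Set.Iic τ, F (z, w) := by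
        funext z
        refine integral_congr_ae (Filter.Eventually.of_forall fun w => ?_)
        exact Real.norm_of_nonneg (by
          have := (phi_pos z).le
          have := (phi_pos (c * w + α * z)).le
          positivity)
      rw [hnorm]
      have hbound : ∀ z : ℝ, ∫ w in Set.Iic τ, F (z, w) ≤ phi z := by
        intro z
        have h1 : ∫ w in Set.Iic τ, F (z, w) ≤ ∫ w : ℝ, F (z, w) := by
          apply setIntegral_le_integral
          · exact ((integrable_phi_affine c (α * z) hc.ne').const_mul c).const_mul (phi z)
          · refine Filter.Eventually.of_forall fun w => ?_
            have := (phi_pos z).le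
            have := (phi_pos (c * w + α * z)).le
            positivity
        have h2 : ∫ w : ℝ, F (z, w) = phi z := by
          simp only [hF]
          rw [MeasureTheory.integral_const_mul, MeasureTheory.integral_const_mul,
            integral_phi_affine c (α * z) hc]
          field_simp
        linarith [h1, h2]
      apply Integrable.mono integrable_phi
      · apply StronglyMeasurable.aestronglyMeasurable
        apply StronglyMeasurable.integral_prod_right
        exact hFcont.stronglyMeasurable
      · refine Filter.Eventually.of_forall fun z => ?_
        rw [Real.norm_of_nonneg, Real.norm_of_nonneg (phi_pos z).le]
        · exact hbound z
        · apply integral_nonneg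
          intro w
          have := (phi_pos z).le
          have := (phi_pos (c * w + α * z)).le
          positivity
  -- main computation
  have hmain : ∫ z : ℝ, phi z * Phi (τ * c + α * z) = Phi τ := by
    have hPhi : ∀ z : ℝ, Phi (τ * c + α * z) = ∫ w in Set.Iic τ, c * phi (c * w + α * z) := by
      intro z
      rw [mul_comm τ c]
      exact Phi_comp c (α * z) τ hc
    calc ∫ z : ℝ, phi z * Phi (τ * c + α * z)
        = ∫ z : ℝ, ∫ w in Set.Iic τ, F (z, w) := by
          refine integral_congr_ae (Filter.Eventually.of_forall fun z => ?_)
          dsimp only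
          rw [hPhi z, ← MeasureTheory.integral_const_mul]
      _ = ∫ w in Set.Iic τ, ∫ z : ℝ, F (z, w) := by
          exact MeasureTheory.integral_integral_swap hFint
      _ = ∫ w in Set.Iic τ, phi w := by
          refine integral_congr_ae (Filter.Eventually.of_forall fun w => ?_)
          simp only [hF]
          calc ∫ z : ℝ, phi z * (c * phi (c * w + α * z))
              = ∫ z : ℝ, phi w * (c * phi (c * z + α * w)) := by
                refine integral_congr_ae (Filter.Eventually.of_forall fun z => ?_)
                exact hkey z w
            _ = phi w := by
                rw [MeasureTheory.integral_const_mul, MeasureTheory.integral_const_mul,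
                  integral_phi_affine c (α * w) hc]
                field_simp
      _ = Phi τ := rfl
  calc ∫ z : ℝ, (Phi τ)⁻¹ * phi z * Phi (τ * c + α * z)
      = (Phi τ)⁻¹ * ∫ z : ℝ, phi z * Phi (τ * c + α * z) := by
        rw [← MeasureTheory.integral_const_mul]
        refine integral_congr_ae (Filter.Eventually.of_forall fun z => ?_)
        ring
    _ = (Phi τ)⁻¹ * Phi τ := by rw [hmain]
    _ = 1 := inv_mul_cancel₀ (Phi_pos τ).ne'
end

section
/- The function ζ₀(x) = log Φ(x), where Φ is the standard normal CDF, is strictly concave on ℝ. -/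
open MeasureTheory Real

lemma integrable_neg_mul_phi : Integrable (fun t => -t * phi t) := by
  have h := (integrable_mul_exp_neg_mul_sq (by norm_num : (0:ℝ) < 1/2)).const_mul
      (Real.sqrt (2 * Real.pi))⁻¹
  have h2 := h.neg
  refine h2.congr (Filter.Eventually.of_forall fun x => ?_)
  simp only [Pi.neg_apply]
  unfold phi; ring_nf

lemma hasDerivAt_phi (x : ℝ) : HasDerivAt phi (-x * phi x) x := by
  have h1 : HasDerivAt (fun t : ℝ => -t ^ 2 / 2) (-x) x := by
    have := ((hasDerivAt_pow 2 x).neg).div_const 2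
    simpa using this.congr_deriv (by ring)
  have h2 := (h1.exp).const_mul (Real.sqrt (2 * Real.pi))⁻¹
  unfold phi
  rw [show -x * ((Real.sqrt (2 * Real.pi))⁻¹ * Real.exp (-x ^ 2 / 2))
      = (Real.sqrt (2 * Real.pi))⁻¹ * (Real.exp (-x ^ 2 / 2) * -x) by ring]
  exact h2

lemma hasDerivAt_Phi (x : ℝ) : HasDerivAt Phi (phi x) x := by
  have key : Phi = fun y => Phi 0 + ∫ t in (0:ℝ)..y, phi t := by
    funext y
    rw [← intervalIntegral.integral_Iic_sub_Iic integrable_phi.integrableOn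
      integrable_phi.integrableOn]
    unfold Phi; ring
  rw [key]
  have h := intervalIntegral.integral_hasDerivAt_right (a := 0) (b := x)
    (integrable_phi.intervalIntegrable)
    (continuous_phi.stronglyMeasurableAtFilter _ _)
    (continuous_phi.continuousAt)
  simpa using (h.const_add (Phi 0))

lemma tendsto_phi_atBot : Filter.Tendsto phi Filter.atBot (nhds 0) := by
  unfold phi
  rw [show (0:ℝ) = (Real.sqrt (2 * Real.pi))⁻¹ * 0 by ring]
  refine Filter.Tendsto.const_mul _ ?_
  refine Real.tendsto_exp_atBot.comp ?_
  have h1 : Filter.Tendsto (fun x : ℝ => x ^ 2) Filter.atBot Filter.atTop := by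
    have habs : Filter.Tendsto (fun x : ℝ => |x|) Filter.atBot Filter.atTop :=
      Filter.tendsto_abs_atBot_atTop
    have hp : Filter.Tendsto (fun y : ℝ => y ^ 2) Filter.atTop Filter.atTop :=
      Filter.tendsto_pow_atTop two_ne_zero
    exact (hp.comp habs).congr fun x => by simp [sq_abs]
  have h2 : Filter.Tendsto (fun x : ℝ => -x ^ 2) Filter.atBot Filter.atBot :=
    Filter.tendsto_neg_atTop_atBot.comp h1
  exact (h2.atBot_div_const (by norm_num)).congr fun x => rfl

lemma integral_Iic_deriv_phi (x : ℝ) : ∫ t in Set.Iic x, (-t * phi t) = phi x := by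
  have h := integral_Iic_of_hasDerivAt_of_tendsto' (a := x) (f := phi)
    (f' := fun t => -t * phi t) (fun t _ => hasDerivAt_phi t)
    integrable_neg_mul_phi.integrableOn
    tendsto_phi_atBot
  simpa using h

lemma Phi_le_phi {x : ℝ} (hx : x ≤ -1) : Phi x ≤ phi x := by
  rw [← integral_Iic_deriv_phi x, Phi]
  refine setIntegral_mono_on integrable_phi.integrableOn
    integrable_neg_mul_phi.integrableOn
    measurableSet_Iic (fun t ht => ?_)
  have h1 : (1:ℝ) ≤ -t := by simp at ht; linarith
  nlinarith [phi_pos t]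

noncomputable def gMills (x : ℝ) : ℝ := phi x + x * Phi x

lemma hasDerivAt_gMills (x : ℝ) : HasDerivAt gMills (Phi x) x := by
  have h := (hasDerivAt_phi x).add ((hasDerivAt_id x).mul (hasDerivAt_Phi x))
  have : -x * phi x + (1 * Phi x + x * phi x) = Phi x := by ring
  rw [← this]
  exact h

lemma tendsto_gMills_atBot : Filter.Tendsto gMills Filter.atBot (nhds 0) := by
  have hxPhi : Filter.Tendsto (fun x => x * Phi x) Filter.atBot (nhds 0) := by
    have hb : Filter.Tendsto (fun x : ℝ => -x * phi x) Filter.atBot (nhds 0) := by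
      have h1 : Filter.Tendsto (fun x : ℝ => -x) Filter.atBot Filter.atTop :=
        Filter.tendsto_neg_atBot_atTop
      have h2 : Filter.Tendsto (fun y : ℝ => y * Real.exp (-y)) Filter.atTop (nhds 0) := by
        simpa using Real.tendsto_pow_mul_exp_neg_atTop_nhds_zero 1
      have h3 : Filter.Tendsto (fun x : ℝ => -x * Real.exp x) Filter.atBot (nhds 0) := by
        have := h2.comp h1
        refine this.congr fun x => by simp
      have key : Filter.Tendsto (fun x : ℝ => -x * Real.exp (-x ^ 2 / 2))
          Filter.atBot (nhds 0) := by
        refine squeeze_zero' ?_ ?_ h3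
        · filter_upwards [Filter.Iic_mem_atBot (-2 : ℝ)] with x hx
          have : (0:ℝ) ≤ -x := by simp at hx; linarith
          positivity
        · filter_upwards [Filter.Iic_mem_atBot (-2 : ℝ)] with x hx
          simp only [Set.mem_Iic] at hx
          have hxe : -x ^ 2 / 2 ≤ x := by nlinarith
          have : (0:ℝ) ≤ -x := by linarith
          exact mul_le_mul_of_nonneg_left (Real.exp_le_exp.mpr hxe) this
      have := key.const_mul (Real.sqrt (2 * Real.pi))⁻¹
      rw [mul_zero] at this
      refine this.congr fun x => ?_
      unfold phi; ring
    have hnb : Filter.Tendsto (fun x : ℝ => -x * Phi x) Filter.atBot (nhds 0) := by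
      refine squeeze_zero' ?_ ?_ hb
      · filter_upwards [Filter.Iic_mem_atBot (-1 : ℝ)] with x hx
        simp only [Set.mem_Iic] at hx
        have h0 : (0:ℝ) ≤ -x := by linarith
        exact mul_nonneg h0 (Phi_pos x).le
      · filter_upwards [Filter.Iic_mem_atBot (-1 : ℝ)] with x hx
        simp only [Set.mem_Iic] at hx
        have h0 : (0:ℝ) ≤ -x := by linarith
        exact mul_le_mul_of_nonneg_left (Phi_le_phi hx) h0
    have := hnb.neg
    rw [neg_zero] at this
    refine this.congr fun x => by ring
  have := tendsto_phi_atBot.add hxPhi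
  rw [add_zero] at this
  exact this

lemma gMills_pos (x : ℝ) : 0 < gMills x := by
  have hmono : StrictMono gMills :=
    strictMono_of_hasDerivAt_pos hasDerivAt_gMills Phi_pos
  have hnonneg : ∀ y : ℝ, 0 ≤ gMills y := by
    intro y
    refine le_of_tendsto tendsto_gMills_atBot ?_
    filter_upwards [Filter.Iic_mem_atBot y] with z hz
    exact (hmono.monotone hz)
  calc (0:ℝ) ≤ gMills (x - 1) := hnonneg _
    _ < gMills x := hmono (by linarith)

theorem logPhi_strictConcave :
    StrictConcaveOn ℝ Set.univ (fun x => Real.log (Phi x)) := by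
  have hd1 : ∀ x : ℝ, HasDerivAt (fun x => Real.log (Phi x)) (phi x / Phi x) x :=
    fun x => (hasDerivAt_Phi x).log (Phi_pos x).ne'
  have hderiv : deriv (fun x => Real.log (Phi x)) = fun x => phi x / Phi x :=
    funext fun x => (hd1 x).deriv
  refine strictConcaveOn_of_deriv2_neg convex_univ
    (fun x _ => ((hd1 x).continuousAt).continuousWithinAt) (fun x _ => ?_)
  have hd2 : HasDerivAt (fun x => phi x / Phi x)
      ((-x * phi x * Phi x - phi x * phi x) / Phi x ^ 2) x :=
    (hasDerivAt_phi x).div (hasDerivAt_Phi x) (Phi_pos x).ne'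
  have : deriv^[2] (fun x => Real.log (Phi x)) x
      = (-x * phi x * Phi x - phi x * phi x) / Phi x ^ 2 := by
    simp only [Function.iterate_succ, Function.iterate_zero, Function.comp_apply, id_eq]
    rw [hderiv]
    exact hd2.deriv
  rw [this]
  apply div_neg_of_neg_of_pos
  · have hg := gMills_pos x
    have hp := phi_pos x
    unfold gMills at hg
    nlinarith
  · exact pow_pos (Phi_pos x) 2
end
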